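/- For every positive integer d and every real k with k > 2πd, ∫₀¹ (1 - cos(2πℓ))^d e^{ikℓ} dℓ = ((-1)^d (2d)! / (2^d π ∏_{j=-d}^{d} (k/(2π) + j))) · e^{ik/2} sin(k/2). -/

import Mathlib

open Real Complex

lemma pf_aux (n : ℕ) : ∀ (y : ℂ), (∀ m : ℕ, m ≤ n + 1 → y + m ≠ 0) →
    ∑ m ∈ Finset.range (n+1), (-1:ℂ)^m * (n.choose m) / (y + m)
      = (n.factorial : ℂ) / ∏ m ∈ Finset.range (n+1), (y + m) := by
  induction n with
  | zero => intro y hy; simp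
  | succ n ih =>
    intro y hy
    have hy0 : ∀ m : ℕ, m ≤ n + 1 → y + m ≠ 0 := fun m hm => hy m (by omega)
    have hy' : ∀ m : ℕ, m ≤ n + 1 → (y + 1) + m ≠ 0 := by
      intro m hm
      have hid : (y+1) + (m:ℂ) = y + ((m+1:ℕ):ℂ) := by push_cast; ring
      rw [hid]; exact hy (m+1) (by omega)
    have step : ∀ m ∈ Finset.range (n+1),
        (-1:ℂ)^(m+1) * (((n+1).choose (m+1) : ℕ)) / (y + ((m+1:ℕ):ℂ))
          = ((-1:ℂ)^(m+1) * ((n.choose (m+1) : ℕ)) / (y + ((m+1:ℕ):ℂ))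
            - (-1:ℂ)^m * ((n.choose m : ℕ)) / ((y+1) + m)) := by
      intro m hm
      have hc : (((n+1).choose (m+1) : ℕ) : ℂ) = (n.choose m : ℂ) + (n.choose (m+1) : ℂ) := by
        rw [Nat.choose_succ_succ]; push_cast; ring
      have hmn := Finset.mem_range.mp hm
      have hne : y + ((m+1:ℕ):ℂ) ≠ 0 := hy (m+1) (by omega)
      have hid : (y+1) + (m:ℂ) = y + ((m+1:ℕ):ℂ) := by push_cast; ring
      rw [hc, hid]
      field_simp
      ring
    have hrec : ∑ m ∈ Finset.range (n+2), (-1:ℂ)^m * (((n+1).choose m : ℕ)) / (y + m)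
        = (∑ m ∈ Finset.range (n+2), (-1:ℂ)^m * ((n.choose m : ℕ)) / (y + m))
          - ∑ m ∈ Finset.range (n+1), (-1:ℂ)^m * ((n.choose m : ℕ)) / ((y+1) + m) := by
      rw [Finset.sum_range_succ' (fun m => (-1:ℂ)^m * (((n+1).choose m : ℕ)) / (y + m)) (n+1),
          Finset.sum_range_succ' (fun m => (-1:ℂ)^m * ((n.choose m : ℕ)) / (y + m)) (n+1),
          Finset.sum_congr rfl step, Finset.sum_sub_distrib]
      simp
      ring
    have hlast : ∑ m ∈ Finset.range (n+2), (-1:ℂ)^m * ((n.choose m : ℕ)) / (y + m)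
        = ∑ m ∈ Finset.range (n+1), (-1:ℂ)^m * ((n.choose m : ℕ)) / (y + m) := by
      rw [Finset.sum_range_succ, Nat.choose_succ_self]
      simp
    rw [hrec, hlast, ih y hy0, ih (y+1) hy']
    have hA : ∏ m ∈ Finset.range (n+1), (y + (m:ℂ)) ≠ 0 :=
      Finset.prod_ne_zero_iff.mpr fun m hm => hy m (by simp at hm; omega)
    have hB : ∏ m ∈ Finset.range (n+1), ((y+1) + (m:ℂ)) ≠ 0 :=
      Finset.prod_ne_zero_iff.mpr fun m hm => hy' m (by simp at hm; omega)
    have hC2 : ∏ m ∈ Finset.range (n+2), (y + (m:ℂ))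
        = y * ∏ m ∈ Finset.range (n+1), ((y+1) + (m:ℂ)) := by
      rw [Finset.prod_range_succ' (fun m => y + (m:ℂ)) (n+1)]
      rw [Finset.prod_congr rfl (fun m _ => by push_cast; ring :
        ∀ m ∈ Finset.range (n+1), y + ((m+1:ℕ):ℂ) = (y+1) + (m:ℂ))]
      push_cast; ring
    have hne : y + ((n+1:ℕ):ℂ) ≠ 0 := hy (n+1) (by omega)
    have hy_ne : y ≠ 0 := by have := hy 0 (by omega); simpa using this
    have hAB : y * ∏ m ∈ Finset.range (n+1), ((y+1) + (m:ℂ))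
        = (∏ m ∈ Finset.range (n+1), (y + (m:ℂ))) * (y + ((n+1:ℕ):ℂ)) := by
      rw [← hC2, Finset.prod_range_succ]
    have hC1 : ∏ m ∈ Finset.range (n+2), (y + (m:ℂ))
        = (∏ m ∈ Finset.range (n+1), (y + (m:ℂ))) * (y + ((n+1:ℕ):ℂ)) := by
      exact_mod_cast Finset.prod_range_succ (fun m => y + (m:ℂ)) (n+1)
    have hfac : (((n+1).factorial : ℕ) : ℂ) = ((n+1:ℕ):ℂ) * (n.factorial : ℂ) := by
      rw [Nat.factorial_succ]; push_cast; ring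
    rw [hfac, show (n+1+1) = n+2 from rfl, hC1,
      div_sub_div _ _ hA hB, div_eq_div_iff (mul_ne_zero hA hB) (mul_ne_zero hA hne)]
    linear_combination (n.factorial : ℂ) * (∏ m ∈ Finset.range (n+1), (y + (m:ℂ))) * hAB

set_option maxHeartbeats 1000000 in
theorem fourier_transform_of_power (d : ℕ) (hd : 0 < d) (k : ℝ) (hk : k > 2 * π * d) :
    ∫ ℓ in (0:ℝ)..1, ((1 - Real.cos (2 * π * ℓ) : ℝ) : ℂ) ^ d
        * Complex.exp (Complex.I * k * ℓ)
      = (((-1 : ℝ) ^ d * ((2 * d).factorial : ℝ)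
            / (2 ^ d * π * ∏ j ∈ Finset.Icc (-(d : ℤ)) (d : ℤ), (k / (2 * π) + (j : ℝ))) : ℝ) : ℂ)
          * Complex.exp (Complex.I * k / 2) * Complex.sin (k / 2) := by
  have hπ : (0:ℝ) < π := Real.pi_pos
  have hπC : (π : ℂ) ≠ 0 := Complex.ofReal_ne_zero.mpr (ne_of_gt hπ)
  set y : ℝ := k / (2*π) - d with hy_def
  have hy_pos : 0 < y := by
    rw [hy_def, sub_pos, lt_div_iff₀ (by positivity)]
    nlinarith
  have hyC : ((y:ℝ) : ℂ) = (k:ℂ) / (2*(π:ℂ)) - d := by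
    rw [hy_def]; push_cast; ring
  have hα : ∀ m : ℕ, (0:ℝ) < 2*π*(y + m) := by
    intro m; positivity
  set c : ℕ → ℂ := fun m => (-(1/2):ℂ)^d * ((-1:ℂ)^m * (((2*d).choose m : ℕ) : ℂ)) with hc
  set z : ℕ → ℂ := fun m => Complex.I * ((2*π*(y+m) : ℝ) : ℂ) with hz
  have hz_ne : ∀ m : ℕ, z m ≠ 0 := fun m =>
    mul_ne_zero Complex.I_ne_zero (Complex.ofReal_ne_zero.mpr (ne_of_gt (hα m)))
  have hyCm : ∀ m : ℕ, ((y:ℝ):ℂ) + m ≠ 0 := by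
    intro m
    have : ((y + m : ℝ) : ℂ) ≠ 0 := Complex.ofReal_ne_zero.mpr (by positivity)
    simpa using this
  have hpt : ∀ ℓ : ℝ, ((1 - Real.cos (2 * π * ℓ) : ℝ) : ℂ) ^ d * Complex.exp (Complex.I * k * ℓ)
      = ∑ m ∈ Finset.range (2*d+1), c m * Complex.exp (z m * ℓ) := by
    intro ℓ
    have e1 : ((1 - Real.cos (2 * π * ℓ) : ℝ) : ℂ)
        = -(1/2) * (Complex.exp (Complex.I*(π*ℓ)) - Complex.exp (-(Complex.I*(π*ℓ))))^2 := by
      rw [Complex.ofReal_sub, Complex.ofReal_one, Complex.ofReal_cos, Complex.cos]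
      have h1 : Complex.exp (Complex.I*(π*ℓ)) * Complex.exp (Complex.I*(π*ℓ))
          = Complex.exp (((2*π*ℓ : ℝ) : ℂ) * Complex.I) := by
        rw [← Complex.exp_add]; push_cast; ring_nf
      have h2 : Complex.exp (-(Complex.I*(π*ℓ))) * Complex.exp (-(Complex.I*(π*ℓ)))
          = Complex.exp (-((2*π*ℓ : ℝ) : ℂ) * Complex.I) := by
        rw [← Complex.exp_add]; push_cast; ring_nf
      have h3 : Complex.exp (Complex.I*(π*ℓ)) * Complex.exp (-(Complex.I*(π*ℓ))) = 1 := by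
        rw [← Complex.exp_add, show Complex.I*(π*ℓ) + -(Complex.I*(π*ℓ)) = 0 by ring,
          Complex.exp_zero]
      linear_combination (1/2 : ℂ) * h1 + (1/2 : ℂ) * h2 - h3
    rw [e1, mul_pow, ← pow_mul, sub_pow, Finset.mul_sum, Finset.sum_mul]
    apply Finset.sum_congr rfl
    intro m hm
    have hm' : m ≤ 2*d := by have := Finset.mem_range.mp hm; omega
    have hsign : (-1:ℂ)^(m+2*d) = (-1)^m := by
      rw [pow_add, pow_mul]; norm_num
    have ha : Complex.exp (Complex.I*(π*ℓ))^m * Complex.exp (-(Complex.I*(π*ℓ)))^(2*d-m)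
        * Complex.exp (Complex.I * k * ℓ) = Complex.exp (z m * ℓ) := by
      rw [← Complex.exp_nat_mul, ← Complex.exp_nat_mul, ← Complex.exp_add, ← Complex.exp_add]
      congr 1
      have hcast : ((2*d - m : ℕ) : ℂ) = 2*(d:ℂ) - m := by
        push_cast [Nat.cast_sub hm']; ring
      rw [hz, hcast]
      push_cast [hyC]
      field_simp
      ring
    simp only [hc]
    rw [hsign]
    linear_combination ((-(1/2):ℂ)^d * ((-1:ℂ)^m * (((2*d).choose m : ℕ) : ℂ))) * ha
  calc (∫ ℓ in (0:ℝ)..1, ((1 - Real.cos (2 * π * ℓ) : ℝ) : ℂ) ^ d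
        * Complex.exp (Complex.I * k * ℓ))
      = ∫ ℓ in (0:ℝ)..1, ∑ m ∈ Finset.range (2*d+1), c m * Complex.exp (z m * ℓ) := by
        apply intervalIntegral.integral_congr
        intro ℓ _
        exact hpt ℓ
    _ = ∑ m ∈ Finset.range (2*d+1), ∫ ℓ in (0:ℝ)..1, c m * Complex.exp (z m * ℓ) := by
        apply intervalIntegral.integral_finset_sum
        intro m _
        apply Continuous.intervalIntegrable
        fun_prop
    _ = ∑ m ∈ Finset.range (2*d+1), c m * ((Complex.exp (Complex.I * k) - 1) / z m) := by
        apply Finset.sum_congr rfl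
        intro m _
        rw [intervalIntegral.integral_const_mul, integral_exp_mul_complex (hz_ne m)]
        have e0 : Complex.exp (z m * ((0:ℝ):ℂ)) = 1 := by
          norm_num
        have e1 : Complex.exp (z m * ((1:ℝ):ℂ)) = Complex.exp (Complex.I * k) := by
          have harg : z m * ((1:ℝ):ℂ)
              = Complex.I * k + (((m:ℤ) - (d:ℤ) : ℤ) : ℂ) * (2*(π:ℂ)*Complex.I) := by
            simp only [hz]
            push_cast [hyC]
            field_simp
            ring
          rw [harg, Complex.exp_add, Complex.exp_int_mul_two_pi_mul_I, mul_one]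
        rw [e0, e1]
    _ = (((-1 : ℝ) ^ d * ((2 * d).factorial : ℝ)
            / (2 ^ d * π * ∏ j ∈ Finset.Icc (-(d : ℤ)) (d : ℤ), (k / (2 * π) + (j : ℝ))) : ℝ) : ℂ)
          * Complex.exp (Complex.I * k / 2) * Complex.sin (k / 2) := by
        have hterm : ∀ m ∈ Finset.range (2*d+1),
            c m * ((Complex.exp (Complex.I * k) - 1) / z m)
              = ((-(1/2):ℂ)^d * (Complex.exp (Complex.I * k) - 1) / (Complex.I * (2*(π:ℂ))))
                * ((-1:ℂ)^m * (((2*d).choose m : ℕ) : ℂ) / (((y:ℝ):ℂ) + m)) := by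
          intro m _
          simp only [hc, hz]
          have : ((2*π*(y+m) : ℝ) : ℂ) = 2*(π:ℂ)*(((y:ℝ):ℂ) + m) := by push_cast; ring
          rw [this]
          have h1 := hyCm m
          field_simp
        rw [Finset.sum_congr rfl hterm, ← Finset.mul_sum]
        rw [pf_aux (2*d) (((y:ℝ)):ℂ) (fun m _ => hyCm m)]
        have hprodR : ∏ m ∈ Finset.range (2*d+1), (y + (m:ℝ))
            = ∏ j ∈ Finset.Icc (-(d:ℤ)) (d:ℤ), (k/(2*π) + (j:ℝ)) := by
          refine Finset.prod_nbij' (fun m => (m:ℤ) - (d:ℤ)) (fun j => (j + d).toNat) ?_ ?_ ?_ ?_ ?_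
          · intro a ha
            simp only [Finset.mem_Icc]
            have := Finset.mem_range.mp ha
            omega
          · intro a ha
            simp only [Finset.mem_range]
            have := Finset.mem_Icc.mp ha
            omega
          · intro a ha
            have := Finset.mem_range.mp ha
            omega
          · intro a ha
            have := Finset.mem_Icc.mp ha
            omega
          · intro a ha
            rw [hy_def]
            push_cast
            ring
        obtain ⟨Q, hQ⟩ : ∃ Q : ℝ, (∏ j ∈ Finset.Icc (-(d:ℤ)) (d:ℤ), (k/(2*π) + (j:ℝ))) = Q :=
          ⟨_, rfl⟩
        have hCprod : ∏ m ∈ Finset.range (2*d+1), (((y:ℝ):ℂ) + m)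
            = ((Q : ℝ) : ℂ) := by
          rw [← hQ, ← hprodR, Complex.ofReal_prod]
          exact Finset.prod_congr rfl fun m _ => by push_cast; ring
        rw [hCprod]
        have hP : (0:ℝ) < Q := by
          rw [← hQ]
          apply Finset.prod_pos
          intro j hj
          have hj1 := (Finset.mem_Icc.mp hj).1
          have hj2 : (-(d:ℝ)) ≤ (j:ℝ) := by exact_mod_cast hj1
          have hkd : (d:ℝ) < k/(2*π) := by
            rw [lt_div_iff₀ (by positivity)]; nlinarith
          linarith
        have hPC : ((Q:ℝ) : ℂ) ≠ 0 :=
          Complex.ofReal_ne_zero.mpr (ne_of_gt hP)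
        have hE : Complex.exp (Complex.I * k) - 1
            = Complex.exp (Complex.I * k / 2) * (2*Complex.I) * Complex.sin ((k:ℂ) / 2) := by
          rw [Complex.sin]
          have h1 : Complex.exp (Complex.I * k / 2) * Complex.exp (-((k:ℂ)/2) * Complex.I) = 1 := by
            rw [← Complex.exp_add, show Complex.I * k / 2 + -((k:ℂ)/2) * Complex.I = 0 by ring,
              Complex.exp_zero]
          have h2 : Complex.exp (Complex.I * k / 2) * Complex.exp (((k:ℂ)/2) * Complex.I)
              = Complex.exp (Complex.I * k) := by
            rw [← Complex.exp_add]; ring_nf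
          linear_combination (-Complex.I^2) * h1 + Complex.I^2 * h2
            + (Complex.exp (Complex.I * (k:ℂ)) - 1) * Complex.I_sq
        rw [hE, hQ]
        push_cast
        rw [div_mul_div_comm, div_mul_eq_mul_div, div_mul_eq_mul_div,
          div_eq_div_iff
            (mul_ne_zero (mul_ne_zero Complex.I_ne_zero
              (mul_ne_zero two_ne_zero hπC)) hPC)
            (mul_ne_zero (mul_ne_zero (pow_ne_zero d two_ne_zero) hπC) hPC)]
        have hpow : ((-(1/2):ℂ))^d * 2^d = (-1)^d := by
          rw [← mul_pow]; norm_num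
        linear_combination (Complex.I * Complex.exp (Complex.I * (k:ℂ) / 2)
          * Complex.sin ((k:ℂ) / 2) * (((2*d).factorial : ℕ) : ℂ) * (π:ℂ) * (Q:ℂ) * 2) * hpow
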